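/- Let G = (V,E) be a strongly connected directed graph on M vertices, let T > 0, and let γ : [0,T] → ℝ^M be a continuously differentiable curve taking values in int P(V). Then the system is path controllable along γ: there exist functions u_e : [0,T] → [0,∞), one for each e ∈ E, such that γ'(t) = Σ_{e∈E} u_e(t) B_e γ(t) for all t ∈ [0,T]. -/

import Mathlib

open Matrix

noncomputable section

/-- The (relative) interior of the probability simplex: strictly positive densities. -/
def probSimplexInterior (M : ℕ) : Set (Fin M → ℝ) :=
  {x | (∀ i, 0 < x i) ∧ ∑ i, x i = 1}

/-- The control matrix `B_e` for an edge `e = (i, j)`: entry `(i,i)` is `-1`, entry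
`(j,i)` is `1`, all other entries vanish. -/
def Bmat (M : ℕ) (e : Fin M × Fin M) : Matrix (Fin M) (Fin M) ℝ :=
  fun i j =>
    (if i = e.1 ∧ j = e.1 then (-1 : ℝ) else 0) + (if i = e.2 ∧ j = e.1 then 1 else 0)

def wvec (M : ℕ) (e : Fin M × Fin M) : Fin M → ℝ :=
  Pi.single e.2 1 - Pi.single e.1 1

lemma Bmat_mulVec (M : ℕ) (e : Fin M × Fin M) (x : Fin M → ℝ) :
    (Bmat M e).mulVec x = x e.1 • wvec M e := by
  funext i
  simp only [Bmat, Matrix.mulVec, dotProduct, wvec, Pi.smul_apply, Pi.sub_apply,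
    Pi.single_apply, add_mul, ite_mul, one_mul, neg_one_mul, zero_mul,
    Finset.sum_add_distrib, smul_eq_mul]
  by_cases h3 : e.1 = e.2 <;> by_cases h1 : i = e.1 <;> by_cases h2 : i = e.2 <;>
    simp [h1, h2, h3, Ne.symm, Finset.sum_ite_eq'] <;>
    first | ring | simp_all | (exfalso; exact h3 (h1 ▸ h2 ▸ rfl))

lemma pathCombo (M : ℕ) (E : Finset (Fin M × Fin M))
    (k l : Fin M) (h : Relation.ReflTransGen (fun a b => (a, b) ∈ E) k l) :
    ∃ c : Fin M × Fin M → ℝ, (∀ e, 0 ≤ c e) ∧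
      (Pi.single l 1 - Pi.single k 1 : Fin M → ℝ) = ∑ e ∈ E, c e • wvec M e := by
  induction h with
  | refl => exact ⟨0, fun e => le_refl 0, by simp⟩
  | @tail b c hb hbc ih =>
    obtain ⟨d, hd0, hd⟩ := ih
    refine ⟨fun e => d e + if e = (b, c) then 1 else 0, ?_, ?_⟩
    · intro e; have := hd0 e; positivity
    · have h1 : ∑ e ∈ E, (if e = (b, c) then (1:ℝ) else 0) • wvec M e = wvec M (b, c) := by
        simp only [ite_smul, one_smul, zero_smul]
        rw [Finset.sum_ite_eq' E (b, c)]
        simp [hbc]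
      calc (Pi.single c 1 - Pi.single k 1 : Fin M → ℝ)
          = (Pi.single b 1 - Pi.single k 1) + wvec M (b, c) := by
            simp only [wvec]; abel
        _ = ∑ e ∈ E, d e • wvec M e + ∑ e ∈ E, (if e = (b, c) then (1:ℝ) else 0) • wvec M e := by
            rw [hd, h1]
        _ = ∑ e ∈ E, (d e + if e = (b, c) then 1 else 0) • wvec M e := by
            rw [← Finset.sum_add_distrib]
            exact Finset.sum_congr rfl (fun e _ => by rw [add_smul])

lemma decompose (M : ℕ) (hM : 1 ≤ M) (E : Finset (Fin M × Fin M))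
    (hconn : ∀ i j : Fin M, Relation.ReflTransGen (fun a b => (a, b) ∈ E) i j)
    (v : Fin M → ℝ) (hv : ∑ i, v i = 0) :
    ∃ c : Fin M × Fin M → ℝ, (∀ e, 0 ≤ c e) ∧ v = ∑ e ∈ E, c e • wvec M e := by
  set i0 : Fin M := ⟨0, hM⟩
  have key : ∀ k : Fin M, ∃ c : Fin M × Fin M → ℝ, (∀ e, 0 ≤ c e) ∧
      v k • (Pi.single k 1 - Pi.single i0 1 : Fin M → ℝ) = ∑ e ∈ E, c e • wvec M e := by
    intro k
    rcases le_or_gt 0 (v k) with h | h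
    · obtain ⟨c, hc0, hc⟩ := pathCombo M E i0 k (hconn i0 k)
      refine ⟨fun e => v k * c e, fun e => mul_nonneg h (hc0 e), ?_⟩
      rw [hc, Finset.smul_sum]
      exact Finset.sum_congr rfl fun e _ => (smul_smul _ _ _)
    · obtain ⟨c, hc0, hc⟩ := pathCombo M E k i0 (hconn k i0)
      refine ⟨fun e => (-v k) * c e, fun e => mul_nonneg (by linarith) (hc0 e), ?_⟩
      have : v k • (Pi.single k 1 - Pi.single i0 1 : Fin M → ℝ)
          = (-v k) • (Pi.single i0 1 - Pi.single k 1 : Fin M → ℝ) := by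
        rw [neg_smul, ← smul_neg]; congr 1; abel
      rw [this, hc, Finset.smul_sum]
      exact Finset.sum_congr rfl fun e _ => (smul_smul _ _ _)
  choose C hC0 hC using key
  refine ⟨fun e => ∑ k, C k e, fun e => Finset.sum_nonneg fun k _ => hC0 k e, ?_⟩
  have hv1 : v = ∑ k, v k • (Pi.single k 1 - Pi.single i0 1 : Fin M → ℝ) := by
    have : ∑ k, v k • (Pi.single k 1 - Pi.single i0 1 : Fin M → ℝ)
        = ∑ k, v k • (Pi.single k 1 : Fin M → ℝ)
          - (∑ k, v k) • (Pi.single i0 1 : Fin M → ℝ) := by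
      rw [Finset.sum_smul, ← Finset.sum_sub_distrib]
      exact Finset.sum_congr rfl fun k _ => smul_sub _ _ _
    rw [this, hv, zero_smul, sub_zero]
    funext i
    simp [Pi.single_apply, Finset.sum_ite_eq, mul_comm]
  rw [hv1]
  rw [Finset.sum_congr rfl fun k (_ : k ∈ Finset.univ) => hC k]
  rw [Finset.sum_comm]
  exact Finset.sum_congr rfl fun e _ => by rw [Finset.sum_smul]

lemma sum_deriv_zero (M : ℕ) (T : ℝ) (hT : 0 < T)
    (γ γ' : ℝ → Fin M → ℝ)
    (hderiv : ∀ t ∈ Set.Icc (0 : ℝ) T, HasDerivWithinAt γ (γ' t) (Set.Icc 0 T) t)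
    (hval : ∀ t ∈ Set.Icc (0 : ℝ) T, ∑ i, γ t i = 1)
    (t : ℝ) (ht : t ∈ Set.Icc (0 : ℝ) T) : ∑ i, γ' t i = 0 := by
  have hud : UniqueDiffWithinAt ℝ (Set.Icc (0:ℝ) T) t :=
    (uniqueDiffOn_Icc hT) t ht
  have h1 : HasDerivWithinAt (fun s => ∑ i, γ s i) (∑ i, γ' t i) (Set.Icc 0 T) t := by
    apply HasDerivWithinAt.fun_sum
    intro i _
    exact ((ContinuousLinearMap.proj (R := ℝ) (φ := fun _ : Fin M => ℝ) i).hasFDerivAt).comp_hasDerivWithinAt t (hderiv t ht)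
  have h2 : HasDerivWithinAt (fun s => ∑ i, γ s i) 0 (Set.Icc 0 T) t :=
    (hasDerivWithinAt_const t _ (1:ℝ)).congr (fun s hs => hval s hs) (hval t ht)
  have := h1.derivWithin hud
  rw [h2.derivWithin hud] at this
  exact this.symm

/-- for a strongly connected digraph, the system is path controllable
along any continuously differentiable curve `γ : [0,T] → int P(V)`: there exist
nonnegative controls `u_e` realizing `γ'(t) = ∑_{e ∈ E} u_e(t) B_e γ(t)`. -/
theorem path_controllability
    (M : ℕ) (hM : 1 ≤ M) (E : Finset (Fin M × Fin M))
    (hloop : ∀ i : Fin M, (i, i) ∉ E)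
    (hconn : ∀ i j : Fin M, Relation.ReflTransGen (fun a b => (a, b) ∈ E) i j)
    (T : ℝ) (hT : 0 < T)
    (γ γ' : ℝ → Fin M → ℝ)
    (hderiv : ∀ t ∈ Set.Icc (0 : ℝ) T, HasDerivWithinAt γ (γ' t) (Set.Icc 0 T) t)
    (hderivCont : ContinuousOn γ' (Set.Icc 0 T))
    (hval : ∀ t ∈ Set.Icc (0 : ℝ) T, γ t ∈ probSimplexInterior M) :
    ∃ u : Fin M × Fin M → ℝ → ℝ,
      (∀ e ∈ E, ∀ t ∈ Set.Icc (0 : ℝ) T, 0 ≤ u e t) ∧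
      ∀ t ∈ Set.Icc (0 : ℝ) T,
        γ' t = ∑ e ∈ E, u e t • (Bmat M e).mulVec (γ t) := by
  have hsum : ∀ t ∈ Set.Icc (0 : ℝ) T, ∑ i, γ' t i = 0 :=
    sum_deriv_zero M T hT γ γ' hderiv (fun t ht => (hval t ht : _ ∧ _).2)
  have hex : ∀ t : ℝ, ∃ c : Fin M × Fin M → ℝ, t ∈ Set.Icc (0:ℝ) T →
      (∀ e, 0 ≤ c e) ∧ γ' t = ∑ e ∈ E, c e • wvec M e := by
    intro t
    by_cases ht : t ∈ Set.Icc (0:ℝ) T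
    · obtain ⟨c, hc0, hc⟩ := decompose M hM E hconn (γ' t) (hsum t ht)
      exact ⟨c, fun _ => ⟨hc0, hc⟩⟩
    · exact ⟨0, fun h => absurd h ht⟩
  choose C hC using hex
  refine ⟨fun e t => C t e / γ t e.1, ?_, ?_⟩
  · intro e _ t ht
    exact div_nonneg ((hC t ht).1 e) (((hval t ht : (∀ i, 0 < γ t i) ∧ _).1 e.1).le)
  · intro t ht
    rw [(hC t ht).2]
    refine Finset.sum_congr rfl fun e _ => ?_
    rw [Bmat_mulVec, smul_smul, div_mul_cancel₀]
    exact ((hval t ht : (∀ i, 0 < γ t i) ∧ _).1 e.1).ne'
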